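/- Dual (Lagrange multiplier) representation of the empirical likelihood ratio. Let g_1, …, g_N ∈ ℝ^p (N ≥ p) and suppose 0 lies in the interior of the convex hull of {g_1, …, g_N}. Then there exists β ∈ ℝ^p with 1 + β'g_k > 0 for all k = 1, …, N satisfying N^{−1}Σ_{k=1}^N g_k/(1 + β'g_k) = 0, such that the weights p_k = [N(1 + β'g_k)]^{−1} are strictly positive, sum to 1, satisfy Σ_{k=1}^N p_k g_k = 0, and maximize Π_{k=1}^N p_k over all probability vectors (p_1,…,p_N) with p_k ≥ 0, Σp_k = 1, Σp_k g_k = 0. Consequently, sup{Π_{k=1}^N p_k : Σp_k = 1, p_k ≥ 0, Σ_k p_k g_k = 0} = N^{−N} Π_{k=1}^N (1 + β'g_k)^{−1}, i.e., the empirical likelihood ratio R = sup{Π p_k}/N^{−N} equals Π_{k=1}^N (1 + β'g_k)^{−1}. -/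

import Mathlib

open MeasureTheory Filter Matrix Finset
open scoped Classical BigOperators Topology

noncomputable section

/-- Euclidean dot product on `Fin m → ℝ`. -/
def dotv {m : ℕ} (x y : Fin m → ℝ) : ℝ := ∑ i, x i * y i

/-- Euclidean norm on `Fin m → ℝ`. -/
def vnorm {m : ℕ} (x : Fin m → ℝ) : ℝ := Real.sqrt (∑ i, x i ^ 2)

/-- ℓ¹ norm on `Fin m → ℝ`. -/
def l1norm {m : ℕ} (x : Fin m → ℝ) : ℝ := ∑ i, |x i|

/-- Frobenius norm of a real square matrix. -/
def normM {m : ℕ} (A : Matrix (Fin m) (Fin m) ℝ) : ℝ := Real.sqrt (∑ i, ∑ j, (A i j) ^ 2)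

/-- Frobenius norm of a complex square matrix. -/
def cnormM {m : ℕ} (A : Matrix (Fin m) (Fin m) ℂ) : ℝ :=
  Real.sqrt (∑ i, ∑ j, (‖A i j‖) ^ 2)

/-- The cube `a (j + [0,1)^d)`. -/
def cube (d : ℕ) (a : ℝ) (j : Fin d → ℤ) : Set (Fin d → ℝ) :=
  Set.univ.pi fun i => Set.Ico (a * (j i : ℝ)) (a * ((j i : ℝ) + 1))

/-- Chi-squared distribution with `p` degrees of freedom, as a Gamma(p/2, 1/2) law. -/
def chiSq (p : ℕ) : Measure ℝ := ProbabilityTheory.gammaMeasure ((p : ℝ) / 2) (1 / 2)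

/-- The standard Gaussian on `Fin p → ℝ` (independent standard normal coordinates). -/
def stdGauss (p : ℕ) : Measure (Fin p → ℝ) :=
  Measure.pi fun _ => ProbabilityTheory.gaussianReal 0 1

/-- The SFDEL setup: a zero-mean second-order stationary random field `Z` on `ℝ^d` with
autocovariance `scov` and spectral density `phi`, sampled at the random sites
`s_i = λ_n X_i` where the `X_i` are i.i.d. with density `f` supported on `cl D0`,
together with the frequency-grid parameters `kap = κ`, `eta = η`, `Cs = C*`, the
(spectral) estimating function `G = G_{θ0}`, and the mixing data `gam1, gam2, del`. -/
structure SFDEL (d p : ℕ) (ΩZ ΩX : Type)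
    [MeasurableSpace ΩZ] [MeasurableSpace ΩX] where
  /-- law of the random field -/
  PZ : Measure ΩZ
  /-- law of the sampling design -/
  PX : Measure ΩX
  probZ : IsProbabilityMeasure PZ
  probX : IsProbabilityMeasure PX
  /-- the random field -/
  Z : (Fin d → ℝ) → ΩZ → ℝ
  /-- the design sequence -/
  X : ℕ → ΩX → (Fin d → ℝ)
  /-- spatial sampling density -/
  f : (Fin d → ℝ) → ℝ
  /-- prototype sampling region -/
  D0 : Set (Fin d → ℝ)
  /-- scaling factors λ_n -/
  lam : ℕ → ℝ
  /-- autocovariance function σ(·) -/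
  scov : (Fin d → ℝ) → ℝ
  /-- spectral density φ -/
  phi : (Fin d → ℝ) → ℝ
  /-- grid spacing exponent κ -/
  kap : ℝ
  /-- grid range exponent η -/
  eta : ℝ
  /-- grid range constant C* -/
  Cs : ℝ
  /-- the estimating function `G_{θ0}` -/
  G : (Fin d → ℝ) → (Fin p → ℝ)
  /-- mixing bound γ₁ -/
  gam1 : ℝ → ℝ
  /-- mixing bound γ₂ -/
  gam2 : ℝ → ℝ
  /-- moment index δ -/
  del : ℝ
  -- measurability
  meas_Z : Measurable (Function.uncurry Z)
  meas_X : ∀ i, Measurable (X i)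
  meas_f : Measurable f
  meas_phi : Measurable phi
  meas_G : Measurable G
  -- sampling design: i.i.d. with density f supported on cl D0
  X_indep : ProbabilityTheory.iIndepFun X PX
  X_law : ∀ i, PX.map (X i) = (volume : Measure (Fin d → ℝ)).withDensity
      (fun x => ENNReal.ofReal (f x))
  f_nonneg : ∀ x, 0 ≤ f x
  f_supp : ∀ x ∉ closure D0, f x = 0
  f_int : ∫ x, f x = 1
  f_sq_int : Integrable (fun x => (f x) ^ 2)
  -- the prototype region D0
  D0_open : IsOpen D0
  D0_conn : IsConnected D0
  D0_zero : (0 : Fin d → ℝ) ∈ D0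
  D0_sub : D0 ⊆ Set.univ.pi fun _ => Set.Ioc (-(1/2) : ℝ) (1/2)
  D0_boundary : ∀ a : ℕ → ℝ, (∀ n, 0 < a n) → Tendsto a atTop (𝓝 0) →
    ∃ C : ℝ, ∀ᶠ n in atTop,
      (Set.ncard {j : Fin d → ℤ |
          (cube d (a n) j ∩ D0).Nonempty ∧ (cube d (a n) j ∩ D0ᶜ).Nonempty} : ℝ)
        ≤ C * (a n) ^ (-((d : ℝ) - 1))
  -- the scaling factors
  lam_ge_one : ∀ n, 1 ≤ lam n
  lam_mono : Monotone lam
  lam_top : Tendsto lam atTop atTop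
  lam_poly : ∃ ε > (0 : ℝ), Tendsto (fun n => lam n / (n : ℝ) ^ ε) atTop atTop
  -- the random field: zero mean, second-order stationary, with spectral density phi
  Z_mean : ∀ s, ∫ ω, Z s ω ∂PZ = 0
  Z_sq_int : ∀ s t, Integrable (fun ω => Z s ω * Z t ω) PZ
  Z_stat : ∀ s h, ∫ ω, Z (s + h) ω * Z s ω ∂PZ = scov h
  phi_nonneg : ∀ x, 0 ≤ phi x
  phi_int : Integrable phi
  spec_rep : ∀ h : Fin d → ℝ,
    (scov h : ℂ) = ∫ ω : Fin d → ℝ, Complex.exp (Complex.I * (dotv ω h : ℂ)) * (phi ω : ℂ)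
  -- grid parameters
  kap_pos : 0 < kap
  kap_lt_one : kap < 1
  kap_le_eta : kap ≤ eta
  Cs_pos : 0 < Cs

namespace SFDEL

variable {d p : ℕ} {ΩZ ΩX : Type} [MeasurableSpace ΩZ] [MeasurableSpace ΩX]
variable (S : SFDEL d p ΩZ ΩX)

/-- The data sites `s_i = λ_n X_i`. -/
def site (n i : ℕ) (ωX : ΩX) : Fin d → ℝ := fun k => S.lam n * S.X i ωX k

/-- `c_n = n / λ_n^d`. -/
def cn (n : ℕ) : ℝ := (n : ℝ) / S.lam n ^ d

/-- The discrete Fourier transform `d_n(ω)`. -/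
def dft (n : ℕ) (ω : Fin d → ℝ) (ωZ : ΩZ) (ωX : ΩX) : ℂ :=
  ((S.lam n ^ ((d : ℝ) / 2) / (n : ℝ) : ℝ) : ℂ) *
    ∑ j ∈ Finset.range n,
      (S.Z (S.site n j ωX) ωZ : ℂ) * Complex.exp (Complex.I * (dotv ω (S.site n j ωX) : ℂ))

/-- The periodogram `I_n(ω) = |d_n(ω)|²`. -/
def perio (n : ℕ) (ω : Fin d → ℝ) (ωZ : ΩZ) (ωX : ΩX) : ℝ :=
  (‖S.dft n ω ωZ ωX‖) ^ 2

/-- The sample mean `Z̄_n`. -/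
def zbar (n : ℕ) (ωZ : ΩZ) (ωX : ΩX) : ℝ :=
  (n : ℝ)⁻¹ * ∑ i ∈ Finset.range n, S.Z (S.site n i ωX) ωZ

/-- The sample variance `σ̂_n(0)`. -/
def sigHat (n : ℕ) (ωZ : ΩZ) (ωX : ΩX) : ℝ :=
  (n : ℝ)⁻¹ * ∑ i ∈ Finset.range n, (S.Z (S.site n i ωX) ωZ - S.zbar n ωZ ωX) ^ 2

/-- The bias-corrected periodogram `Ĩ_n(ω) = I_n(ω) − n⁻¹λ_n^d σ̂_n(0)`. -/
def perioT (n : ℕ) (ω : Fin d → ℝ) (ωZ : ΩZ) (ωX : ΩX) : ℝ :=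
  S.perio n ω ωZ ωX - (S.lam n ^ d / (n : ℝ)) * S.sigHat n ωZ ωX

/-- `I_n^*(ω) = I_n(ω) − c_n⁻¹ σ(0)`. -/
def perioS (n : ℕ) (ω : Fin d → ℝ) (ωZ : ΩZ) (ωX : ΩX) : ℝ :=
  S.perio n ω ωZ ωX - (S.cn n)⁻¹ * S.scov 0

/-- `K = (2π)^d ∫ f²`. -/
def K : ℝ := (2 * Real.pi) ^ d * ∫ x, (S.f x) ^ 2

/-- `A_n(ω) = c_n⁻¹ σ(0) + K φ(ω)`. -/
def A (n : ℕ) (ω : Fin d → ℝ) : ℝ := (S.cn n)⁻¹ * S.scov 0 + S.K * S.phi ω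

/-- The integer index set of the frequency grid:
`j ∈ ℤ^d` with `j ∈ [−C*λ_n^η, C*λ_n^η]^d`. -/
def grid (n : ℕ) : Finset (Fin d → ℤ) :=
  Fintype.piFinset fun _ =>
    Finset.Icc ⌈-(S.Cs * S.lam n ^ S.eta)⌉ ⌊S.Cs * S.lam n ^ S.eta⌋

/-- The grid frequency `ω = λ_n^{−κ} j`. -/
def freq (n : ℕ) (j : Fin d → ℤ) : Fin d → ℝ := fun i => S.lam n ^ (-S.kap) * (j i : ℝ)

/-- `N = |𝒩_n|`, the number of grid frequencies. -/
def Nn (n : ℕ) : ℕ := (S.grid n).card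

/-- `b_n² = N c_n^{−2} + λ_n^{κ d}`. -/
def b2 (n : ℕ) : ℝ := (S.Nn n : ℝ) / S.cn n ^ 2 + S.lam n ^ (S.kap * d)

/-- `Σ_n = 2 Σ_k G(ω_k) G(ω_k)' A_n²(ω_k)`. -/
def Smat (n : ℕ) : Matrix (Fin p) (Fin p) ℝ :=
  (2 : ℝ) • ∑ j ∈ S.grid n,
    (S.A n (S.freq n j)) ^ 2 • Matrix.vecMulVec (S.G (S.freq n j)) (S.G (S.freq n j))

/-- `N⁻¹ Σ_k G(ω_k) G(ω_k)'`. -/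
def Gmat (n : ℕ) : Matrix (Fin p) (Fin p) ℝ :=
  ((S.Nn n : ℝ))⁻¹ • ∑ j ∈ S.grid n,
    Matrix.vecMulVec (S.G (S.freq n j)) (S.G (S.freq n j))

/-- The SFDEL likelihood `L_n(θ0)` (equal to `0` when the constraint set is empty,
using `Real.sSup ∅ = 0`). -/
def EL (n : ℕ) (ωZ : ΩZ) (ωX : ΩX) : ℝ :=
  sSup {r : ℝ | ∃ w : (Fin d → ℤ) → ℝ,
    (∀ j ∈ S.grid n, 0 ≤ w j) ∧ (∑ j ∈ S.grid n, w j) = 1 ∧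
    (∀ i : Fin p, ∑ j ∈ S.grid n,
        w j * (S.G (S.freq n j) i * S.perioT n (S.freq n j) ωZ ωX) = 0) ∧
    r = ∏ j ∈ S.grid n, w j}

/-- The SFDEL ratio statistic `R_n(θ0) = L_n(θ0)/N^{−N}`. -/
def Rstat (n : ℕ) (ωZ : ΩZ) (ωX : ΩX) : ℝ :=
  (S.Nn n : ℝ) ^ (S.Nn n) * S.EL n ωZ ωX

/-- The data-based scaling factor `a_n(θ0)`. -/
def an (n : ℕ) (ωZ : ΩZ) (ωX : ΩX) : ℝ :=
  (∑ j ∈ S.grid n, (∑ i, (S.G (S.freq n j) i) ^ 2) * (S.perioT n (S.freq n j) ωZ ωX) ^ 2) /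
  (∑ j ∈ S.grid n, (∑ i, (S.G (S.freq n j) i) ^ 2) * (S.perio n (S.freq n j) ωZ ωX) ^ 2)

/-- `F_n(θ0, β)`, the estimating function of the Lagrange-multiplier dual problem. -/
def Fdual (n : ℕ) (β : Fin p → ℝ) (ωZ : ΩZ) (ωX : ΩX) : Fin p → ℝ := fun i =>
  ((S.Nn n : ℝ))⁻¹ * ∑ j ∈ S.grid n,
    (S.G (S.freq n j) i * S.perioT n (S.freq n j) ωZ ωX) /
      (1 + dotv β (S.perioT n (S.freq n j) ωZ ωX • S.G (S.freq n j)))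

/-- `J_n = N⁻¹ Σ_k G(ω_k) Ĩ_n(ω_k)`. -/
def Jv (n : ℕ) (ωZ : ΩZ) (ωX : ΩX) : Fin p → ℝ :=
  ((S.Nn n : ℝ))⁻¹ • ∑ j ∈ S.grid n, S.perioT n (S.freq n j) ωZ ωX • S.G (S.freq n j)

/-- `W_n = N⁻¹ Σ_k G(ω_k) G(ω_k)' Ĩ_n²(ω_k)`. -/
def Wm (n : ℕ) (ωZ : ΩZ) (ωX : ΩX) : Matrix (Fin p) (Fin p) ℝ :=
  ((S.Nn n : ℝ))⁻¹ • ∑ j ∈ S.grid n,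
    (S.perioT n (S.freq n j) ωZ ωX) ^ 2 •
      Matrix.vecMulVec (S.G (S.freq n j)) (S.G (S.freq n j))

/-- The σ-field generated by `{Z(s) : s ∈ E}`. -/
def sigmaZ (E : Set (Fin d → ℝ)) : MeasurableSpace ΩZ :=
  ⨆ s ∈ E, MeasurableSpace.comap (S.Z s) inferInstance

/-- The strong mixing coefficient `α(a; b)` over pairs of rectangles of volume `≤ b`
at ℓ¹-distance `≥ a`. -/
def mixCoef (a b : ℝ) : ℝ :=
  sSup {x : ℝ | ∃ l1 u1 l2 u2 : Fin d → ℝ,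
    (∏ i, (u1 i - l1 i)) ≤ b ∧ (∏ i, (u2 i - l2 i)) ≤ b ∧
    (∀ y ∈ Set.univ.pi fun i => Set.Icc (l1 i) (u1 i),
      ∀ z ∈ Set.univ.pi fun i => Set.Icc (l2 i) (u2 i), a ≤ l1norm (y - z)) ∧
    ∃ A1, MeasurableSet[S.sigmaZ (Set.univ.pi fun i => Set.Icc (l1 i) (u1 i))] A1 ∧
    ∃ A2, MeasurableSet[S.sigmaZ (Set.univ.pi fun i => Set.Icc (l2 i) (u2 i))] A2 ∧
    x = |(S.PZ (A1 ∩ A2)).toReal - (S.PZ A1).toReal * (S.PZ A2).toReal|}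

/-- Condition (C.0): the strong mixing coefficient is bounded by `γ₁(a)γ₂(b)` with
`γ₁` left-continuous nonincreasing and `γ₂` right-continuous nondecreasing positive. -/
def C0 : Prop :=
  (∀ x, 0 ≤ S.gam1 x) ∧ AntitoneOn S.gam1 (Set.Ioi 0) ∧
  (∀ x > (0 : ℝ), ContinuousWithinAt S.gam1 (Set.Iio x) x) ∧
  (∀ x > (0 : ℝ), 0 < S.gam2 x) ∧ MonotoneOn S.gam2 (Set.Ioi 0) ∧
  (∀ x > (0 : ℝ), ContinuousWithinAt S.gam2 (Set.Ioi x) x) ∧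
  (∀ a > (0 : ℝ), ∀ b > (0 : ℝ), S.mixCoef a b ≤ S.gam1 a * S.gam2 b)

/-- Condition (C.1): uniform `4+δ` moments and summable mixing rates. -/
def C1 : Prop :=
  (0 < S.del ∧ S.del ≤ 1) ∧
  (∀ s, Integrable (fun ω => |S.Z s ω| ^ (4 + S.del)) S.PZ) ∧
  (∃ M : ℝ, ∀ s, ∫ ω, |S.Z s ω| ^ (4 + S.del) ∂S.PZ ≤ M) ∧
  Summable (fun k : ℕ => (k : ℝ) ^ (3 * d) * S.gam1 k ^ (S.del / (4 + S.del)))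

/-- Condition (C.2): `f` is positive and Lipschitz on `D0` and the characteristic
functions of `f` and `f²` decay at rate `‖ω‖^{−a₀}` for some `a₀ ∈ (d/2, d]`. -/
def C2 : Prop :=
  (∀ x ∈ S.D0, 0 < S.f x) ∧
  (∃ C0 : ℝ, ∀ x ∈ S.D0, ∀ y ∈ S.D0, |S.f x - S.f y| ≤ C0 * vnorm (x - y)) ∧
  ∃ C1 > (0 : ℝ), ∃ a0 : ℝ, (d : ℝ) / 2 < a0 ∧ a0 ≤ d ∧
    ∀ ω : Fin d → ℝ, C1 < vnorm ω →
      ‖∫ x : Fin d → ℝ, Complex.exp (Complex.I * (dotv ω x : ℂ)) * (S.f x : ℂ)‖ +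
      ‖∫ x : Fin d → ℝ,
          Complex.exp (Complex.I * (dotv ω x : ℂ)) * ((S.f x : ℂ)) ^ 2‖
        ≤ C1 * vnorm ω ^ (-a0)

/-- Condition (C.3)(i): `G_{θ0}` is bounded, symmetric, a.e. continuous, and satisfies
the spectral moment condition `∫ G_{θ0} φ = 0`. -/
def C3i : Prop :=
  (∃ B : ℝ, ∀ ω, vnorm (S.G ω) ≤ B) ∧
  (∀ ω, S.G (-ω) = S.G ω) ∧
  (∀ᵐ ω ∂(volume : Measure (Fin d → ℝ)), ContinuousAt S.G ω) ∧
  (∀ i, ∫ ω : Fin d → ℝ, S.G ω i * S.phi ω = 0)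

/-- Condition (C.3)(ii): tail bound on the spectral density. -/
def C3ii : Prop :=
  ∃ C2 : ℝ, ∃ h : ℝ → ℝ, AntitoneOn h (Set.Ici 0) ∧
    ∀ ω : Fin d → ℝ, C2 < vnorm ω → |S.phi ω| ≤ h (vnorm ω)

/-- Condition (C.3)(iii): `liminf det(N⁻¹ Σ_k G G') > 0`. -/
def C3iii : Prop := 0 < Filter.liminf (fun n => (S.Gmat n).det) atTop

/-- Condition (C.3)(iv): `∫ G G' φ²` is nonsingular. -/
def C3iv : Prop :=
  IsUnit (Matrix.det (Matrix.of fun i i' : Fin p =>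
    ∫ ω : Fin d → ℝ, S.G ω i * S.G ω i' * (S.phi ω) ^ 2))

/-- Condition (C.3). -/
def C3 : Prop := S.C3i ∧ S.C3ii ∧ S.C3iii ∧ S.C3iv

/-- Condition (C.4): `0 < κ < η < 1`, and the CLT
`Σ_n^{−1/2} Σ_k G(ω_k) I_n^*(ω_k) →d N(0, I_p)` (conditionally on the design,
for `P_X`-almost every design realization), where `Σ_n^{−1/2}` is the symmetric
matrix square root of `Σ_n⁻¹`. -/
def C4 : Prop :=
  (0 < S.kap ∧ S.kap < S.eta ∧ S.eta < 1) ∧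
  ∃ Sroot : ℕ → Matrix (Fin p) (Fin p) ℝ,
    (∀ᶠ n in atTop, (Sroot n).IsSymm ∧ Sroot n * S.Smat n * Sroot n = 1) ∧
    (∀ᵐ ωX ∂S.PX, ∀ g : BoundedContinuousFunction (Fin p → ℝ) ℝ,
      Tendsto (fun n => ∫ ωZ, g ((Sroot n).mulVec
          (∑ j ∈ S.grid n, S.perioS n (S.freq n j) ωZ ωX • S.G (S.freq n j))) ∂S.PZ)
        atTop (𝓝 (∫ v, g v ∂(stdGauss p))))

/-- Condition (C.5)': domination of the matrix exponential sums
`Σ_k G(ω_k)G(ω_k)' e^{i t'ω_k}` by functions `M_n` with the stated `o(·)` growth of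
their double `ν ⊗ ν` integrals. -/
def C5' : Prop :=
  ∃ M : ℕ → (Fin d → ℝ) → ℝ,
    (∀ n t, 0 ≤ M n t) ∧
    (∀ n, ∀ t : Fin d → ℝ,
      cnormM (Matrix.of fun i i' : Fin p => ∑ j ∈ S.grid n,
        ((S.G (S.freq n j) i * S.G (S.freq n j) i' : ℝ) : ℂ) *
          Complex.exp (Complex.I * (dotv t (S.freq n j) : ℂ))) ≤ M n t) ∧
    ∀ a1 a2 a3 : ℝ, a1 ∈ ({0, 1} : Set ℝ) → a2 ∈ ({0, 1} : Set ℝ) → a3 ∈ ({0, 1} : Set ℝ) →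
      Tendsto (fun n =>
        (∫ q : ((Fin d → ℝ) × (Fin d → ℝ)) × ((Fin d → ℝ) × (Fin d → ℝ)),
          M n (q.1.1 + a1 • (q.2.1 + (2 * S.lam n * a2) • q.1.2 + (2 * S.lam n * a3) • q.2.2)) *
            (vnorm q.1.1 * S.gam1 (vnorm q.1.1) ^ (S.del / (4 + S.del)) * S.f q.1.2) *
            (vnorm q.2.1 * S.gam1 (vnorm q.2.1) ^ (S.del / (4 + S.del)) * S.f q.2.2)) /
          (S.b2 n * S.cn n ^ ((1 : ℝ) - a1) * S.lam n ^ ((1 : ℝ) + a1)))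
        atTop (𝓝 0)

end SFDEL

section ELDualAux

private lemma el_hull_weights {p N : ℕ} (g : Fin N → Fin p → ℝ) {x : Fin p → ℝ}
    (hx : x ∈ convexHull ℝ (Set.range g)) :
    ∃ μ : Fin N → ℝ, (∀ k, 0 ≤ μ k) ∧ (∑ k, μ k) = 1 ∧
      ∀ i, ∑ k, μ k * g k i = x i := by
  rw [mem_convexHull_iff_exists_fintype] at hx
  obtain ⟨ι, hι, w, z, hw0, hw1, hz, hzx⟩ := hx
  choose φ hφ using hz
  refine ⟨fun k => ∑ i ∈ Finset.univ.filter (fun i => φ i = k), w i,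
    fun k => Finset.sum_nonneg fun i _ => hw0 i, ?_, ?_⟩
  · rw [← hw1]
    exact Finset.sum_fiberwise _ _ _
  · intro i
    have key : ∑ k, (∑ j ∈ Finset.univ.filter (fun j => φ j = k), w j) * g k i
        = ∑ j, w j * z j i := by
      rw [← Finset.sum_fiberwise (Finset.univ) φ (fun j => w j * z j i)]
      refine Finset.sum_congr rfl fun k _ => ?_
      rw [Finset.sum_mul]
      refine Finset.sum_congr rfl fun j hj => ?_
      simp only [Finset.mem_filter] at hj
      rw [← hj.2, hφ j]
    rw [key, ← hzx]
    simp [Finset.sum_apply, Pi.smul_apply, smul_eq_mul]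

private lemma el_smul_norm_lt {m : ℕ} {ε : ℝ} (hε : 0 < ε) (w : Fin m → ℝ) :
    ‖(ε / (2 * ‖w‖ + 2)) • w‖ < ε := by
  have hd : 0 < 2 * ‖w‖ + 2 := by positivity
  rw [norm_smul, Real.norm_eq_abs, abs_of_pos (by positivity)]
  calc ε / (2 * ‖w‖ + 2) * ‖w‖ < ε / (2 * ‖w‖ + 2) * (2 * ‖w‖ + 2) := by
        apply mul_lt_mul_of_pos_left _ (by positivity)
        linarith [norm_nonneg w]
    _ = ε := by field_simp

end ELDualAux

/-- **Dual (Lagrange multiplier) representation of the empirical likelihood ratio.**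
If `0` lies in the interior of the convex hull of `g_1, …, g_N ∈ ℝ^p` (`N ≥ p`), then
there is `β ∈ ℝ^p` with `1 + β'g_k > 0` for all `k` solving
`N⁻¹ Σ_k g_k/(1 + β'g_k) = 0`, such that the weights `p_k = [N(1 + β'g_k)]⁻¹` are
positive, sum to `1`, satisfy `Σ p_k g_k = 0`, maximize `Π p_k` over the constraint set,
and the empirical likelihood ratio equals `Π_k (1 + β'g_k)⁻¹`. -/
theorem el_dual_representation {p N : ℕ} (hpN : p ≤ N) (g : Fin N → Fin p → ℝ)
    (hhull : (0 : Fin p → ℝ) ∈ interior (convexHull ℝ (Set.range g))) :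
    ∃ β : Fin p → ℝ,
      (∀ k, 0 < 1 + dotv β (g k)) ∧
      (∀ i, (N : ℝ)⁻¹ * ∑ k, g k i / (1 + dotv β (g k)) = 0) ∧
      (∀ k, 0 < ((N : ℝ) * (1 + dotv β (g k)))⁻¹) ∧
      (∑ k, ((N : ℝ) * (1 + dotv β (g k)))⁻¹) = 1 ∧
      (∀ i, ∑ k, ((N : ℝ) * (1 + dotv β (g k)))⁻¹ * g k i = 0) ∧
      (∀ q : Fin N → ℝ, (∀ k, 0 ≤ q k) → (∑ k, q k) = 1 →
        (∀ i, ∑ k, q k * g k i = 0) →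
        ∏ k, q k ≤ ∏ k, ((N : ℝ) * (1 + dotv β (g k)))⁻¹) ∧
      sSup {r : ℝ | ∃ q : Fin N → ℝ, (∀ k, 0 ≤ q k) ∧ (∑ k, q k) = 1 ∧
          (∀ i, ∑ k, q k * g k i = 0) ∧ r = ∏ k, q k} =
        ((N : ℝ) ^ N)⁻¹ * ∏ k, (1 + dotv β (g k))⁻¹ := by
  classical
  -- N is positive
  have hN : 0 < N := by
    rcases Nat.eq_zero_or_pos N with h | h
    · exfalso
      subst h
      rw [Set.range_eq_empty, convexHull_empty, interior_empty] at hhull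
      exact hhull
    · exact h
  have hNR : (0 : ℝ) < N := Nat.cast_pos.2 hN
  -- a ball around 0 inside the hull
  obtain ⟨ε, hε, hball⟩ := Metric.mem_nhds_iff.1 (mem_interior_iff_mem_nhds.1 hhull)
  -- a strictly positive feasible point
  set c : Fin p → ℝ := fun i => (N : ℝ)⁻¹ * ∑ k, g k i with hc
  set t : ℝ := ε / (2 * ‖c‖ + 2) with ht
  have htpos : 0 < t := by positivity
  have hmem : (-t) • c ∈ convexHull ℝ (Set.range g) := by
    apply hball
    rw [Metric.mem_ball, dist_zero_right, neg_smul, norm_neg]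
    exact el_smul_norm_lt hε c
  obtain ⟨μ, hμ0, hμ1, hμg⟩ := el_hull_weights g hmem
  set q0 : Fin N → ℝ := fun k => (1 + t)⁻¹ * (μ k + t * (N : ℝ)⁻¹) with hq0
  have hq0pos : ∀ k, 0 < q0 k := by
    intro k
    have h := hμ0 k
    have : 0 < μ k + t * (N : ℝ)⁻¹ := by positivity
    positivity
  have hq0sum : ∑ k, q0 k = 1 := by
    simp only [hq0, ← Finset.mul_sum]
    rw [Finset.sum_add_distrib, hμ1, Finset.sum_const, Finset.card_univ, Fintype.card_fin]
    field_simp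
    rw [nsmul_eq_mul]
    field_simp [hNR.ne']
  have hq0g : ∀ i, ∑ k, q0 k * g k i = 0 := by
    intro i
    have h1 : ∑ k, μ k * g k i = (-t) * c i := by simpa using hμg i
    have h2 : ∑ k, t * (N : ℝ)⁻¹ * g k i = t * c i := by
      simp only [hc, mul_assoc]
      rw [← Finset.mul_sum, ← Finset.mul_sum]
    calc ∑ k, q0 k * g k i
        = (1 + t)⁻¹ * ∑ k, (μ k * g k i + t * (N : ℝ)⁻¹ * g k i) := by
          rw [Finset.mul_sum]
          exact Finset.sum_congr rfl fun k _ => by simp only [hq0]; ring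
      _ = (1 + t)⁻¹ * ((-t) * c i + t * c i) := by
          rw [Finset.sum_add_distrib, h1, h2]
      _ = 0 := by ring
  -- the feasible set and its compactness
  set K : Set (Fin N → ℝ) :=
    {x | (∀ k, 0 ≤ x k) ∧ (∑ k, x k) = 1 ∧ ∀ i, ∑ k, x k * g k i = 0} with hK
  have hq0K : q0 ∈ K := ⟨fun k => (hq0pos k).le, hq0sum, hq0g⟩
  have hKclosed : IsClosed K := by
    have hKeq : K = (⋂ k, {x : Fin N → ℝ | 0 ≤ x k}) ∩
        ({x : Fin N → ℝ | ∑ k, x k = 1} ∩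
          ⋂ i, {x : Fin N → ℝ | ∑ k, x k * g k i = 0}) := by
      ext x
      simp only [hK, Set.mem_setOf_eq, Set.mem_inter_iff, Set.mem_iInter]
    rw [hKeq]
    refine IsClosed.inter (isClosed_iInter fun k => ?_)
      (IsClosed.inter ?_ (isClosed_iInter fun i => ?_))
    · exact isClosed_le continuous_const (continuous_apply k)
    · exact isClosed_eq (continuous_finset_sum _ fun k _ => continuous_apply k) continuous_const
    · exact isClosed_eq
        (continuous_finset_sum _ fun k _ => (continuous_apply k).mul continuous_const)
        continuous_const
  have hKcomp : IsCompact K := by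
    refine IsCompact.of_isClosed_subset (isCompact_Icc (a := (0 : Fin N → ℝ)) (b := 1))
      hKclosed ?_
    rintro x ⟨h0, h1, -⟩
    refine Set.mem_Icc.2 ⟨fun k => h0 k, fun k => ?_⟩
    calc x k ≤ ∑ j, x j := Finset.single_le_sum (fun j _ => h0 j) (Finset.mem_univ k)
      _ = 1 := h1
  have hcont : Continuous fun x : Fin N → ℝ => ∏ k, x k :=
    continuous_finset_prod _ fun k _ => continuous_apply k
  obtain ⟨q, hqK, hqmax⟩ := hKcomp.exists_isMaxOn ⟨q0, hq0K⟩ hcont.continuousOn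
  have hprodpos : 0 < ∏ k, q k :=
    lt_of_lt_of_le (Finset.prod_pos fun k _ => hq0pos k) (hqmax hq0K)
  have hqpos : ∀ k, 0 < q k := by
    intro k
    rcases (hqK.1 k).lt_or_eq with h | h
    · exact h
    · exfalso
      rw [Finset.prod_eq_zero (Finset.mem_univ k) h.symm] at hprodpos
      exact lt_irrefl _ hprodpos
  -- Lagrange multipliers at q
  set fc : Option (Fin p) → (Fin N → ℝ) → ℝ :=
    fun o => Option.elim o (fun x => ∑ k, x k) (fun i x => ∑ k, x k * g k i) with hfc
  set fd : Option (Fin p) → (Fin N → ℝ) →L[ℝ] ℝ :=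
    fun o => Option.elim o (∑ k, ContinuousLinearMap.proj k)
      (fun i => ∑ k, g k i • ContinuousLinearMap.proj k) with hfd
  have hprojD : ∀ x : Fin N → ℝ, ∀ k : Fin N,
      HasStrictFDerivAt (fun y : Fin N → ℝ => y k)
        (ContinuousLinearMap.proj (R := ℝ) (φ := fun _ : Fin N => ℝ) k) x := fun x k =>
    (ContinuousLinearMap.proj (R := ℝ) (φ := fun _ : Fin N => ℝ) k).hasStrictFDerivAt
  have hfd' : ∀ o, HasStrictFDerivAt (fc o) (fd o) q := by
    rintro (_ | i)
    · exact HasStrictFDerivAt.fun_sum fun k _ => hprojD q k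
    · exact HasStrictFDerivAt.fun_sum fun k _ => (hprojD q k).mul_const (g k i)
  set φf : (Fin N → ℝ) → ℝ := fun x => ∑ k, Real.log (x k) with hφf
  set φd : (Fin N → ℝ) →L[ℝ] ℝ := ∑ k, (q k)⁻¹ • ContinuousLinearMap.proj k with hφd
  have hφd' : HasStrictFDerivAt φf φd q :=
    HasStrictFDerivAt.fun_sum fun k _ =>
      by have := (Real.hasStrictDerivAt_log (hqpos k).ne').comp_hasStrictFDerivAt q (hprojD q k)
         exact this
  have hextr : IsLocalExtrOn φf {x | ∀ o, fc o x = fc o q} q := by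
    refine Or.inr ?_
    have hopen : {x : Fin N → ℝ | ∀ k, 0 < x k} ∈ 𝓝 q := by
      apply IsOpen.mem_nhds
      · rw [Set.setOf_forall]
        exact isOpen_iInter_of_finite fun k =>
          isOpen_lt continuous_const (continuous_apply k)
      · exact hqpos
    filter_upwards [nhdsWithin_le_nhds hopen, self_mem_nhdsWithin] with x hxpos hxS
    have hxK : x ∈ K := by
      refine ⟨fun k => (hxpos k).le, ?_, fun i => ?_⟩
      · have := hxS none
        simp only [hfc, Option.elim] at this
        rw [this, hqK.2.1]
      · have := hxS (some i)
        simp only [hfc, Option.elim] at this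
        rw [this, hqK.2.2 i]
    have hx : ∏ k, x k ≤ ∏ k, q k := hqmax hxK
    calc φf x = Real.log (∏ k, x k) :=
          (Real.log_prod fun k _ => (hxpos k).ne').symm
      _ ≤ Real.log (∏ k, q k) := by
          have hp : (0:ℝ) < ∏ k, x k := Finset.prod_pos fun k _ => hxpos k
          gcongr
      _ = φf q := Real.log_prod fun k _ => (hqpos k).ne'
  obtain ⟨Λ, Λ₀, hΛne, hΛsum⟩ := hextr.exists_multipliers_of_hasStrictFDerivAt hfd' hφd'
  have hev : ∀ k, Λ none + (∑ i, Λ (some i) * g k i) + Λ₀ * (q k)⁻¹ = 0 := by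
    intro k
    have h := congrFun (congrArg DFunLike.coe hΛsum) (Pi.single k 1)
    have hfdnone : fd none (Pi.single k 1) = 1 := by
      simp [hfd, ContinuousLinearMap.sum_apply, Finset.sum_pi_single']
    have hfdsome : ∀ i, fd (some i) (Pi.single k 1) = g k i := by
      intro i
      simp [hfd, ContinuousLinearMap.sum_apply, Pi.single_apply, mul_ite,
        Finset.sum_ite_eq']
    have hφdev : φd (Pi.single k 1) = (q k)⁻¹ := by
      simp [hφd, ContinuousLinearMap.sum_apply, Pi.single_apply, mul_ite,
        Finset.sum_ite_eq']
    rw [ContinuousLinearMap.add_apply, ContinuousLinearMap.sum_apply] at h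
    rw [Fintype.sum_option] at h
    simp only [ContinuousLinearMap.smul_apply, smul_eq_mul, hfdnone, hfdsome, hφdev,
      ContinuousLinearMap.zero_apply, mul_one] at h
    linear_combination h
  -- rule out Λ₀ = 0
  have hΛ₀ : Λ₀ ≠ 0 := by
    intro h0
    have hevz : ∀ k, Λ none + (∑ i, Λ (some i) * g k i) = 0 := by
      intro k
      have h := hev k
      rw [h0, zero_mul, add_zero] at h
      exact h
    have hhull0 : ∀ y ∈ convexHull ℝ (Set.range g),
        Λ none + ∑ i, Λ (some i) * y i = 0 := by
      intro y hy
      obtain ⟨ν, hν0, hν1, hνg⟩ := el_hull_weights g hy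
      have h1 : ∑ k, ν k * (∑ i, Λ (some i) * g k i) = ∑ i, Λ (some i) * y i := by
        simp only [Finset.mul_sum]
        rw [Finset.sum_comm]
        refine Finset.sum_congr rfl fun i _ => ?_
        rw [← hνg i, Finset.mul_sum]
        exact Finset.sum_congr rfl fun k _ => by ring
      have h2 : ∑ k, ν k * (Λ none + ∑ i, Λ (some i) * g k i)
          = Λ none + ∑ i, Λ (some i) * y i := by
        rw [Finset.sum_congr rfl fun k (_ : k ∈ Finset.univ) => mul_add (ν k) _ _,
          Finset.sum_add_distrib, ← Finset.sum_mul, hν1, one_mul, h1]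
      rw [← h2]
      exact Finset.sum_eq_zero fun k _ => by rw [hevz k, mul_zero]
    have hz : (0 : Fin p → ℝ) ∈ convexHull ℝ (Set.range g) := interior_subset hhull
    have hnone : Λ none = 0 := by
      have h := hhull0 0 hz
      simpa using h
    set v : Fin p → ℝ := fun i => Λ (some i) with hv
    have hvz : ∀ i, Λ (some i) = 0 := by
      set δ : ℝ := ε / (2 * ‖v‖ + 2) with hδ
      have hδpos : 0 < δ := by positivity
      have hymem : δ • v ∈ convexHull ℝ (Set.range g) := by
        apply hball
        rw [Metric.mem_ball, dist_zero_right]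
        exact el_smul_norm_lt hε v
      have h := hhull0 (δ • v) hymem
      rw [hnone, zero_add] at h
      have hδv : ∑ i, Λ (some i) * (δ • v) i = δ * ∑ i, v i ^ 2 := by
        rw [Finset.mul_sum]
        refine Finset.sum_congr rfl fun i _ => ?_
        simp only [hv, Pi.smul_apply, smul_eq_mul]
        ring
      rw [hδv] at h
      have hsq : ∑ i, v i ^ 2 = 0 := (mul_eq_zero.1 h).resolve_left hδpos.ne'
      intro i
      have h5 := (Finset.sum_eq_zero_iff_of_nonneg fun j _ => sq_nonneg (v j)).1 hsq i
        (Finset.mem_univ i)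
      exact (pow_eq_zero_iff two_ne_zero).1 h5
    apply hΛne
    have hΛ0 : Λ = 0 := by
      funext o
      cases o with
      | none => exact hnone
      | some i => exact hvz i
    rw [hΛ0, h0]
    rfl
  -- from the multiplier equation to the dual weights
  have hmul : ∀ k, Λ none * q k + (∑ i, Λ (some i) * g k i) * q k + Λ₀ = 0 := by
    intro k
    have h3 : (q k)⁻¹ * q k = 1 := inv_mul_cancel₀ (hqpos k).ne'
    linear_combination (q k) * hev k - Λ₀ * h3
  have hA : Λ none = -(N : ℝ) * Λ₀ := by
    have hTq : ∑ k, (∑ i, Λ (some i) * g k i) * q k = 0 := by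
      have hstep : ∀ k, (∑ i, Λ (some i) * g k i) * q k
          = ∑ i, Λ (some i) * (q k * g k i) := by
        intro k
        rw [Finset.sum_mul]
        exact Finset.sum_congr rfl fun i _ => by ring
      rw [Finset.sum_congr rfl fun k (_ : k ∈ Finset.univ) => hstep k, Finset.sum_comm]
      refine Finset.sum_eq_zero fun i _ => ?_
      rw [← Finset.mul_sum, hqK.2.2 i, mul_zero]
    have h0 : ∑ k, (Λ none * q k + (∑ i, Λ (some i) * g k i) * q k + Λ₀) = 0 :=
      Finset.sum_eq_zero fun k _ => hmul k
    rw [Finset.sum_add_distrib, Finset.sum_add_distrib, ← Finset.mul_sum, hqK.2.1, mul_one,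
      hTq, Finset.sum_const, Finset.card_univ, Fintype.card_fin, nsmul_eq_mul, add_zero] at h0
    linarith
  set β : Fin p → ℝ := fun i => -Λ (some i) / ((N : ℝ) * Λ₀) with hβ
  have hdotv : ∀ k, dotv β (g k)
      = -(∑ i, Λ (some i) * g k i) / ((N : ℝ) * Λ₀) := by
    intro k
    simp only [dotv, hβ]
    have hNΛ : (N : ℝ) * Λ₀ ≠ 0 := mul_ne_zero hNR.ne' hΛ₀
    rw [eq_div_iff hNΛ, Finset.sum_mul, ← Finset.sum_neg_distrib]
    refine Finset.sum_congr rfl fun i _ => ?_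
    field_simp
  have h1 : ∀ k, 1 + dotv β (g k) = ((N : ℝ) * q k)⁻¹ := by
    intro k
    have hS : (∑ i, Λ (some i) * g k i) = (N : ℝ) * Λ₀ - Λ₀ * (q k)⁻¹ := by
      have h := hev k
      rw [hA] at h
      linarith
    rw [hdotv k, hS]
    have hq := (hqpos k).ne'
    have hN' := hNR.ne'
    field_simp
    ring
  have hqeq : ∀ k, ((N : ℝ) * (1 + dotv β (g k)))⁻¹ = q k := by
    intro k
    have hq := (hqpos k).ne'
    have hN' := hNR.ne'
    rw [h1 k]
    field_simp
  have hprod : ∏ k, ((N : ℝ) * (1 + dotv β (g k)))⁻¹ = ∏ k, q k :=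
    Finset.prod_congr rfl fun k _ => hqeq k
  refine ⟨β, ?_, ?_, ?_, ?_, ?_, ?_, ?_⟩
  · intro k
    rw [h1 k]
    have := hqpos k
    positivity
  · intro i
    have hinv : ∀ k, (1 + dotv β (g k))⁻¹ = (N : ℝ) * q k := fun k => by
      rw [h1 k, inv_inv]
    simp only [div_eq_mul_inv, hinv]
    have hstep : ∑ k, g k i * ((N : ℝ) * q k) = (N : ℝ) * ∑ k, q k * g k i := by
      rw [Finset.mul_sum]
      exact Finset.sum_congr rfl fun k _ => by ring
    rw [hstep, hqK.2.2 i, mul_zero, mul_zero]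
  · intro k
    rw [hqeq k]
    exact hqpos k
  · simp only [hqeq]
    exact hqK.2.1
  · intro i
    simp only [hqeq]
    exact hqK.2.2 i
  · intro q' h0 h1' h2
    rw [hprod]
    exact hqmax ⟨h0, h1', h2⟩
  · have hgreat : IsGreatest {r : ℝ | ∃ q' : Fin N → ℝ, (∀ k, 0 ≤ q' k) ∧ (∑ k, q' k) = 1 ∧
        (∀ i, ∑ k, q' k * g k i = 0) ∧ r = ∏ k, q' k} (∏ k, q k) := by
      constructor
      · exact ⟨q, hqK.1, hqK.2.1, hqK.2.2, rfl⟩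
      · rintro r ⟨q', h0, h1', h2, rfl⟩
        exact hqmax ⟨h0, h1', h2⟩
    rw [hgreat.csSup_eq]
    calc ∏ k, q k = ∏ k, ((N : ℝ)⁻¹ * (1 + dotv β (g k))⁻¹) := by
          refine Finset.prod_congr rfl fun k _ => ?_
          rw [← hqeq k, mul_inv]
      _ = ((N : ℝ) ^ N)⁻¹ * ∏ k, (1 + dotv β (g k))⁻¹ := by
          rw [Finset.prod_mul_distrib, Finset.prod_const, Finset.card_univ,
            Fintype.card_fin, inv_pow]
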